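/- Let 𝒳 be a finite set with m elements. There exists ϑ > 0, depending only on m, such that for all n ∈ ℕ, all ω_n ∈ M_n(𝒳) and all ϖ_n ∈ M̃_{*,n}(𝒳×𝒳), the number of elements of K^{(n)}(ω_n,ϖ_n) satisfies #K^{(n)}(ω_n,ϖ_n) ≤ exp[ ϑ·(log n)·(n‖ϖ_n‖)^{(2m−1)/(2m)} ], where ‖ϖ_n‖ = Σ_{a,b} ϖ_n(a,b). -/

import Mathlib

set_option maxHeartbeats 1000000


open Filter Topology

namespace ColoredLDP

noncomputable section

/-- Extended logarithm: `⊥` at nonpositive arguments. -/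
def elog (x : ℝ) : EReal := if x ≤ 0 then (⊥ : EReal) else ((Real.log x : ℝ) : EReal)

open Classical in
/-- Relative entropy of finite measures on a finite set, with value `⊤` if
absolute continuity fails. -/
def relEntFin {Y : Type} [Fintype Y] (ν ρ : Y → ℝ) : EReal :=
  if ∀ y, ρ y = 0 → ν y = 0 then (((∑ y, ν y * Real.log (ν y / ρ y)) : ℝ) : EReal)
  else (⊤ : EReal)

open Classical in
/-- Relative entropy of measures on a countable set, with value `⊤` if absolute
continuity fails or the defining series is not (absolutely) summable. -/
def relEntC {Y : Type} (ν ρ : Y → ℝ) : EReal :=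
  if (∀ y, ρ y = 0 → ν y = 0) ∧ Summable (fun y => ν y * Real.log (ν y / ρ y)) then
    (((∑' y, ν y * Real.log (ν y / ρ y)) : ℝ) : EReal)
  else (⊤ : EReal)

variable {𝒳 : Type} [Fintype 𝒳] [DecidableEq 𝒳]

/-- `𝔥_C(ϖ‖ω) = H(ϖ‖Cω⊗ω) + ‖Cω⊗ω‖ − ‖ϖ‖`. -/
def hC (C : 𝒳 → 𝒳 → ℝ) (ϖ : 𝒳 → 𝒳 → ℝ) (ω : 𝒳 → ℝ) : EReal :=
  relEntFin (fun q : 𝒳 × 𝒳 => ϖ q.1 q.2) (fun q : 𝒳 × 𝒳 => C q.1 q.2 * ω q.1 * ω q.2)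
    + (((∑ a, ∑ b, C a b * ω a * ω b) : ℝ) : EReal) - (((∑ a, ∑ b, ϖ a b) : ℝ) : EReal)

/-- A probability mass function. -/
def IsPMF {Y : Type} (ν : Y → ℝ) : Prop := (∀ y, 0 ≤ ν y) ∧ HasSum ν 1

/-- The `𝒳`-marginal `ν₁` of a measure on `𝒳 × ℕ^𝒳`. -/
def marg (ν : 𝒳 × (𝒳 → ℕ) → ℝ) (a : 𝒳) : ℝ := ∑' ℓ : 𝒳 → ℕ, ν (a, ℓ)

/-- The measure `⟨ν(·,ℓ), ℓ(·)⟩`, the second component of `Φ(ν)`. -/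
def pairOf (ν : 𝒳 × (𝒳 → ℕ) → ℝ) (a b : 𝒳) : ℝ := ∑' ℓ : 𝒳 → ℕ, ν (a, ℓ) * (ℓ b : ℝ)

/-- Sub-consistency of a pair `(ϖ, ν)`. -/
def SubConsistent (ϖ : 𝒳 → 𝒳 → ℝ) (ν : 𝒳 × (𝒳 → ℕ) → ℝ) : Prop :=
  ∀ a b : 𝒳, (∑' ℓ : 𝒳 → ℕ, ENNReal.ofReal (ν (a, ℓ) * (ℓ b : ℝ))) ≤ ENNReal.ofReal (ϖ a b)

/-- The measure with colour law `ω` under which the neighbourhood counts are independent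
Poisson variables with means `ϖ(a,b)/ω(a)`; `Q[ϖ,ν]` is `Qof ϖ ν₁`. -/
def Qof (ϖ : 𝒳 → 𝒳 → ℝ) (ω : 𝒳 → ℝ) (x : 𝒳 × (𝒳 → ℕ)) : ℝ :=
  ω x.1 * ∏ b : 𝒳,
    Real.exp (-(ϖ x.1 b / ω x.1)) * (ϖ x.1 b / ω x.1) ^ (x.2 b) / (Nat.factorial (x.2 b) : ℝ)

/-- The set of possible (ordered) edges on `n` vertices. -/
abbrev Edge (n : ℕ) := {e : Fin n × Fin n // e.1 < e.2}

/-- A coloured graph on `n` vertices: a colouring together with an edge set. -/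
abbrev Config (𝒳 : Type) (n : ℕ) := (Fin n → 𝒳) × Finset (Edge n)

/-- The probability weight of a configuration under the coloured random graph law. -/
def wt {n : ℕ} (μ : 𝒳 → ℝ) (p : 𝒳 → 𝒳 → ℝ) (x : Config 𝒳 n) : ℝ :=
  (∏ v, μ (x.1 v)) *
    ∏ e : Edge n,
      if e ∈ x.2 then p (x.1 e.1.1) (x.1 e.1.2) else 1 - p (x.1 e.1.1) (x.1 e.1.2)

/-- The law of the coloured random graph, evaluated on an event. -/
def graphP (𝒳 : Type) [Fintype 𝒳] [DecidableEq 𝒳] (n : ℕ) (μ : 𝒳 → ℝ) (p : 𝒳 → 𝒳 → ℝ)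
    (A : Set (Config 𝒳 n)) : ℝ :=
  ∑ x : Config 𝒳 n, A.indicator (wt μ p) x

/-- Conditional probability for the coloured random graph. -/
def condP (𝒳 : Type) [Fintype 𝒳] [DecidableEq 𝒳] (n : ℕ) (μ : 𝒳 → ℝ) (p : 𝒳 → 𝒳 → ℝ)
    (A B : Set (Config 𝒳 n)) : ℝ :=
  graphP 𝒳 n μ p (A ∩ B) / graphP 𝒳 n μ p B

/-- Conditional expectation for the coloured random graph. -/
def condE (𝒳 : Type) [Fintype 𝒳] [DecidableEq 𝒳] (n : ℕ) (μ : 𝒳 → ℝ) (p : 𝒳 → 𝒳 → ℝ)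
    (f : Config 𝒳 n → ℝ) (B : Set (Config 𝒳 n)) : ℝ :=
  (∑ x : Config 𝒳 n, B.indicator (fun x => wt μ p x * f x) x) / graphP 𝒳 n μ p B

/-- The empirical colour measure `L¹`. -/
def empColor {n : ℕ} (x : Config 𝒳 n) (a : 𝒳) : ℝ :=
  ((Finset.univ.filter (fun v : Fin n => x.1 v = a)).card : ℝ) / n

/-- The empirical pair measure `L²`. -/
def empPair {n : ℕ} (x : Config 𝒳 n) (a b : 𝒳) : ℝ :=
  (∑ e ∈ x.2, ((if x.1 e.1.1 = a ∧ x.1 e.1.2 = b then (1:ℝ) else 0) +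
    (if x.1 e.1.2 = a ∧ x.1 e.1.1 = b then (1:ℝ) else 0))) / n

/-- The number of neighbours of `v` of colour `b`. -/
def locDeg {n : ℕ} (x : Config 𝒳 n) (v : Fin n) (b : 𝒳) : ℕ :=
  (x.2.filter (fun e => (e.1.1 = v ∧ x.1 e.1.2 = b) ∨ (e.1.2 = v ∧ x.1 e.1.1 = b))).card

/-- The empirical neighbourhood measure `M`. -/
def empNbhd {n : ℕ} (x : Config 𝒳 n) (y : 𝒳 × (𝒳 → ℕ)) : ℝ :=
  ((Finset.univ.filter (fun v : Fin n =>
      x.1 v = y.1 ∧ (fun b => locDeg x v b) = y.2)).card : ℝ) / n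

/-- Total variation distance between measures on `𝒳 × ℕ^𝒳`. -/
def dTV (ν ν' : 𝒳 × (𝒳 → ℕ) → ℝ) : ℝ := (1 / 2) * ∑' y, |ν y - ν' y|

end
end ColoredLDP

namespace ColoredLDP


section Aux

open Finset


private lemma numeric_bound (m n S t C N : ℕ)
    (hm1 : 1 ≤ m) (hn2 : 2 ≤ n) (hS2 : 2 ≤ S) (htpos : 0 < t)
    (ht1 : (S:ℝ) ^ ((1:ℝ)/((m:ℝ)+1)) ≤ (t:ℝ))
    (ht2 : (t:ℝ) ≤ 2 * (S:ℝ) ^ ((1:ℝ)/((m:ℝ)+1)))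
    (hCdef : C = m * (t^m + S/t))
    (hN1 : 1 ≤ N) (hNn : N ≤ n^(7*m)) :
    (((C+1) * N^C : ℕ) : ℝ) ≤ Real.exp ((((m:ℝ)+1)^2 * 2^(m+5)) * Real.log n *
      (S:ℝ) ^ ((2*(m:ℝ)-1)/(2*(m:ℝ)))) := by
  set u : ℝ := (1:ℝ)/((m:ℝ)+1) with hudef
  set α : ℝ := (2*(m:ℝ)-1)/(2*(m:ℝ)) with hα
  set ϑ : ℝ := (((m:ℝ)+1)^2 * 2^(m+5)) with hϑ
  have hSR1 : (1:ℝ) ≤ (S:ℝ) := by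
    have : (1:ℕ) ≤ S := by omega
    exact_mod_cast this
  have hu0 : (0:ℝ) ≤ u := by rw [hudef]; positivity
  have htR1 : (1:ℝ) ≤ (S:ℝ) ^ u := Real.one_le_rpow hSR1 hu0
  have hN0R : (0:ℝ) < (N:ℝ) := by exact_mod_cast hN1
  have hlogN : Real.log N ≤ 7*(m:ℝ) * Real.log n := by
    calc Real.log N ≤ Real.log ((n:ℝ)^(7*m)) := by
          apply Real.log_le_log hN0R
          exact_mod_cast hNn
      _ = ((7*m : ℕ):ℝ) * Real.log n := by rw [Real.log_pow]
      _ = 7*(m:ℝ) * Real.log n := by push_cast; ring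
  set w : ℝ := (m:ℝ)/((m:ℝ)+1) with hwdef
  have hSpos : (0:ℝ) < (S:ℝ) := lt_of_lt_of_le one_pos hSR1
  have htRpos : (0:ℝ) < (t:ℝ) := by exact_mod_cast htpos
  have hSu_pos : (0:ℝ) < (S:ℝ)^u := lt_of_lt_of_le one_pos htR1
  have hSw0 : (0:ℝ) ≤ (S:ℝ)^w := Real.rpow_nonneg (le_of_lt hSpos) w
  have hmR : (1:ℝ) ≤ (m:ℝ) := by exact_mod_cast hm1
  have hCreal : (C:ℝ) ≤ (m:ℝ) * 2^(m+1) * (S:ℝ)^w := by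
    have h1 : ((t:ℝ))^m ≤ 2^m * (S:ℝ)^w := by
      calc ((t:ℝ))^m ≤ (2*(S:ℝ)^u)^m := by
            apply pow_le_pow_left₀ (le_of_lt htRpos) ht2
        _ = 2^m * ((S:ℝ)^u)^m := mul_pow _ _ _
        _ = 2^m * (S:ℝ)^w := by
            rw [← Real.rpow_natCast ((S:ℝ)^u) m, ← Real.rpow_mul (le_of_lt hSpos)]
            congr 1
            rw [hudef, hwdef]
            field_simp
    have h2 : (S:ℝ)/(t:ℝ) ≤ (S:ℝ)^w := by
      calc (S:ℝ)/(t:ℝ) ≤ (S:ℝ)/(S:ℝ)^u := by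
            apply div_le_div_of_nonneg_left (le_of_lt hSpos) hSu_pos ht1
        _ = (S:ℝ)^((1:ℝ)-u) := by rw [Real.rpow_sub hSpos, Real.rpow_one]
        _ = (S:ℝ)^w := by
            congr 1
            rw [hudef, hwdef]
            field_simp
            ring
    have hdiv : ((S/t : ℕ) : ℝ) ≤ (S:ℝ)/(t:ℝ) := Nat.cast_div_le
    calc (C:ℝ) = (m:ℝ) * (((t:ℝ))^m + ((S/t : ℕ):ℝ)) := by rw [hCdef]; push_cast; ring
      _ ≤ (m:ℝ) * (2^m * (S:ℝ)^w + (S:ℝ)^w) := by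
          apply mul_le_mul_of_nonneg_left _ (by linarith : (0:ℝ) ≤ (m:ℝ))
          exact add_le_add h1 (hdiv.trans h2)
      _ = (m:ℝ) * (2^m + 1) * (S:ℝ)^w := by ring
      _ ≤ (m:ℝ) * 2^(m+1) * (S:ℝ)^w := by
          have h2m : (2:ℝ)^m + 1 ≤ 2^(m+1) := by
            have hp1 : (1:ℝ) ≤ 2^m := one_le_pow₀ (by norm_num : (1:ℝ) ≤ 2)
            rw [pow_succ]
            linarith
          apply mul_le_mul_of_nonneg_right
            (mul_le_mul_of_nonneg_left h2m (by linarith)) hSw0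
  have hwα : (S:ℝ)^w ≤ (S:ℝ)^α := by
    apply Real.rpow_le_rpow_of_exponent_le hSR1
    rw [hα, hwdef]
    rw [div_le_div_iff₀ (by linarith) (by linarith)]
    nlinarith
  have hlogn1 : (1:ℝ) ≤ 2 * Real.log n := by
    have h2 : Real.log 2 ≤ Real.log n := by
      apply Real.log_le_log (by norm_num)
      exact_mod_cast hn2
    have h3 := Real.log_two_gt_d9
    linarith
  have hlogn0 : (0:ℝ) ≤ Real.log n := by linarith
  have hC0 : (0:ℝ) ≤ (C:ℝ) := Nat.cast_nonneg C
  have hP0 : (0:ℝ) ≤ (S:ℝ)^α := Real.rpow_nonneg (le_of_lt hSpos) α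
  have hMW0 : (0:ℝ) ≤ (m:ℝ)*2^(m+1) := by positivity
  have hCP : (C:ℝ) ≤ (m:ℝ)*2^(m+1) * (S:ℝ)^α :=
    hCreal.trans (mul_le_mul_of_nonneg_left hwα hMW0)
  have e7 : 9*(m:ℝ)*((m:ℝ)*2^(m+1)) ≤ ϑ := by
    rw [hϑ]
    have hpow : (2:ℝ)^(m+5) = 2^(m+1) * 16 := by
      rw [show m+5 = (m+1)+4 from by omega, pow_add]
      norm_num
    rw [hpow]
    nlinarith [pow_pos (show (0:ℝ) < 2 from by norm_num) (m+1)]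
  have hfinal : Real.log ((C:ℝ)+1) + (C:ℝ) * Real.log N
      ≤ ϑ * Real.log n * (S:ℝ)^α := by
    have e1 : Real.log ((C:ℝ)+1) ≤ (C:ℝ) := by
      have := Real.log_le_sub_one_of_pos (show (0:ℝ) < (C:ℝ)+1 by positivity)
      linarith
    have e2 : (C:ℝ) * Real.log N ≤ (C:ℝ) * (7*(m:ℝ) * Real.log n) :=
      mul_le_mul_of_nonneg_left hlogN hC0
    have e3 : (C:ℝ) ≤ (C:ℝ) * (2*Real.log n) := by nlinarith
    calc Real.log ((C:ℝ)+1) + (C:ℝ) * Real.log N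
        ≤ (C:ℝ) * (2*Real.log n) + (C:ℝ) * (7*(m:ℝ) * Real.log n) := by
          have := e1.trans e3
          linarith
      _ = (C:ℝ) * ((2 + 7*(m:ℝ)) * Real.log n) := by ring
      _ ≤ ((m:ℝ)*2^(m+1) * (S:ℝ)^α) * ((2 + 7*(m:ℝ)) * Real.log n) := by
          apply mul_le_mul_of_nonneg_right hCP
          apply mul_nonneg (by linarith) hlogn0
      _ ≤ ((m:ℝ)*2^(m+1) * (S:ℝ)^α) * ((9*(m:ℝ)) * Real.log n) := by
          apply mul_le_mul_of_nonneg_left _ (mul_nonneg hMW0 hP0)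
          apply mul_le_mul_of_nonneg_right (by linarith) hlogn0
      _ = (9*(m:ℝ)*((m:ℝ)*2^(m+1))) * Real.log n * (S:ℝ)^α := by ring
      _ ≤ ϑ * Real.log n * (S:ℝ)^α := by
          apply mul_le_mul_of_nonneg_right _ hP0
          exact mul_le_mul_of_nonneg_right e7 hlogn0
  have hCN0 : (0:ℝ) < ((C:ℝ)+1) * (N:ℝ)^C := by positivity
  calc (((C+1) * N^C : ℕ):ℝ)
      = ((C:ℝ)+1) * (N:ℝ)^C := by push_cast; ring
    _ ≤ Real.exp (ϑ * Real.log n * (S:ℝ)^α) := by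
        rw [← Real.exp_log hCN0]
        apply Real.exp_le_exp.mpr
        calc Real.log (((C:ℝ)+1) * (N:ℝ)^C)
            = Real.log ((C:ℝ)+1) + (C:ℝ)*Real.log N := by
              rw [Real.log_mul (by positivity) (by positivity), Real.log_pow]
          _ ≤ ϑ * Real.log n * (S:ℝ)^α := hfinal

private lemma S_succ_le (n S E : ℕ) (hn2 : 2 ≤ n) (hSE : S = 2*E) (hE : E ≤ n^2) :
    S + 1 ≤ n^4 := by
  have h4 : 4 ≤ n^2 := by nlinarith
  have h5 : n^2*n^2 = n^4 := by ring
  nlinarith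

private lemma N_le_pow (m n S N : ℕ) (hm1 : 1 ≤ m) (hn2 : 2 ≤ n)
    (hSle : S + 1 ≤ n^4) (hNval : N = (m * (S+1)^m) * (n+1)) : N ≤ n^(7*m) := by
  have hmn : m ≤ n^m := by
    calc m ≤ 2^m := Nat.le_of_lt m.lt_two_pow_self
      _ ≤ n^m := Nat.pow_le_pow_left hn2 m
  have hn1n : n + 1 ≤ n^2 := by nlinarith
  calc N = (m * (S+1)^m) * (n+1) := hNval
    _ ≤ (n^m * (n^4)^m) * n^2 :=
        Nat.mul_le_mul (Nat.mul_le_mul hmn (Nat.pow_le_pow_left hSle m)) hn1n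
    _ = n^(m + 4*m + 2) := by rw [← pow_mul, ← pow_add, ← pow_add]
    _ ≤ n^(7*m) := Nat.pow_le_pow_right (by omega) (by omega)


private lemma dsum_ite {A B M : Type} [Fintype A] [Fintype B] [DecidableEq A] [DecidableEq B]
    [AddCommMonoid M] (x : A) (y : B) (k : M) :
    ∑ v : A, ∑ b : B, (if x = v ∧ y = b then k else 0) = k := by
  simp [ite_and, Finset.sum_ite_eq]

private lemma triple_swap {I K A M : Type} [AddCommMonoid M] (s : Finset I) (t : Finset K)
    (u : Finset A) (F : I → K → A → M) :
    ∑ a ∈ s, ∑ b ∈ t, ∑ e ∈ u, F a b e = ∑ e ∈ u, ∑ a ∈ s, ∑ b ∈ t, F a b e := by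
  calc ∑ a ∈ s, ∑ b ∈ t, ∑ e ∈ u, F a b e
      = ∑ a ∈ s, ∑ e ∈ u, ∑ b ∈ t, F a b e :=
        Finset.sum_congr rfl (fun a _ => Finset.sum_comm)
    _ = ∑ e ∈ u, ∑ a ∈ s, ∑ b ∈ t, F a b e := Finset.sum_comm

private lemma pair_sum {𝒳 : Type} [Fintype 𝒳] [DecidableEq 𝒳] {n : ℕ} (hn : n ≠ 0)
    (x : Config 𝒳 n) :
    (n : ℝ) * ∑ a, ∑ b, empPair x a b = 2 * x.2.card := by
  have key : ∀ e : Edge n, (∑ a : 𝒳, ∑ b : 𝒳,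
      ((if x.1 e.1.1 = a ∧ x.1 e.1.2 = b then (1:ℝ) else 0) +
       (if x.1 e.1.2 = a ∧ x.1 e.1.1 = b then (1:ℝ) else 0))) = 2 := by
    intro e
    simp only [Finset.sum_add_distrib]
    rw [dsum_ite, dsum_ite]
    norm_num
  simp only [empPair, ← Finset.sum_div]
  rw [triple_swap, Finset.sum_congr rfl (fun e _ => key e), Finset.sum_const, nsmul_eq_mul]
  have hnR : (n:ℝ) ≠ 0 := by exact_mod_cast hn
  field_simp

private lemma deg_sum {𝒳 : Type} [Fintype 𝒳] [DecidableEq 𝒳] {n : ℕ} (x : Config 𝒳 n) :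
    ∑ v : Fin n, ∑ b : 𝒳, locDeg x v b = 2 * x.2.card := by
  have h1 : ∀ (v : Fin n) (b : 𝒳), locDeg x v b =
      ∑ e ∈ x.2, if (e.1.1 = v ∧ x.1 e.1.2 = b) ∨ (e.1.2 = v ∧ x.1 e.1.1 = b) then 1 else 0 :=
    fun v b => Finset.card_filter _ _
  have key : ∀ e ∈ x.2, (∑ v : Fin n, ∑ b : 𝒳,
      if (e.1.1 = v ∧ x.1 e.1.2 = b) ∨ (e.1.2 = v ∧ x.1 e.1.1 = b) then 1 else 0) = 2 := by
    intro e _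
    have hne : e.1.1 ≠ e.1.2 := ne_of_lt e.2
    have hsplit : ∀ (v : Fin n) (b : 𝒳),
        (if (e.1.1 = v ∧ x.1 e.1.2 = b) ∨ (e.1.2 = v ∧ x.1 e.1.1 = b) then (1:ℕ) else 0)
        = (if e.1.1 = v ∧ x.1 e.1.2 = b then 1 else 0)
          + (if e.1.2 = v ∧ x.1 e.1.1 = b then 1 else 0) := by
      intro v b
      by_cases hP : e.1.1 = v ∧ x.1 e.1.2 = b <;> by_cases hQ : e.1.2 = v ∧ x.1 e.1.1 = b
      · exact absurd (hP.1.trans hQ.1.symm) hne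
      · rw [if_pos (Or.inl hP), if_pos hP, if_neg hQ]
      · rw [if_pos (Or.inr hQ), if_neg hP, if_pos hQ]
      · rw [if_neg (by tauto), if_neg hP, if_neg hQ]
    simp only [hsplit, Finset.sum_add_distrib]
    rw [dsum_ite, dsum_ite]
  simp only [h1]
  rw [triple_swap, Finset.sum_congr rfl key, Finset.sum_const, smul_eq_mul, mul_comm]

end Aux

/-- Lemma 4.1: bound on the number of empirical neighbourhood measures compatible
with given empirical colour and pair measures. -/
theorem card_nbhd_measures_bound (𝒳 : Type) [Fintype 𝒳] [DecidableEq 𝒳] :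
    ∃ ϑ : ℝ, 0 < ϑ ∧ ∀ (n : ℕ) (ωn : 𝒳 → ℝ) (ϖn : 𝒳 → 𝒳 → ℝ),
      ((∀ a, 0 ≤ ωn a) ∧ (∑ a, ωn a) = 1 ∧ ∀ a, ∃ k : ℕ, (n : ℝ) * ωn a = (k : ℝ)) →
      ((∀ a b, 0 ≤ ϖn a b) ∧ (∀ a b, ϖn a b = ϖn b a) ∧
        ∀ a b, ∃ k : ℕ, (n : ℝ) * ϖn a b / (1 + if a = b then 1 else 0) = (k : ℝ)) →
      (Set.ncard {ν : (𝒳 × (𝒳 → ℕ)) → ℝ |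
          ∃ x : Config 𝒳 n, empColor x = ωn ∧ empPair x = ϖn ∧ empNbhd x = ν} : ℝ) ≤
        Real.exp (ϑ * Real.log n *
          ((n : ℝ) * ∑ a, ∑ b, ϖn a b) ^
            ((2 * (Fintype.card 𝒳 : ℝ) - 1) / (2 * (Fintype.card 𝒳 : ℝ)))) := by
  classical
  set m := Fintype.card 𝒳 with hm
  refine ⟨((m:ℝ)+1)^2 * 2^(m+5), by positivity, ?_⟩
  intro n ωn ϖn hω hϖ
  obtain ⟨hϖ0, hϖsymm, hϖint⟩ := hϖ
  set sν : Set ((𝒳 × (𝒳 → ℕ)) → ℝ) :=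
    {ν | ∃ x : Config 𝒳 n, empColor x = ωn ∧ empPair x = ϖn ∧ empNbhd x = ν} with hsν
  set ϑ : ℝ := ((m:ℝ)+1)^2 * 2^(m+5) with hϑ
  set α : ℝ := (2*(m:ℝ)-1)/(2*(m:ℝ)) with hα
  set R : ℝ := Real.exp (ϑ * Real.log n * ((n : ℝ) * ∑ a, ∑ b, ϖn a b) ^ α) with hR
  have hbase : 0 ≤ (n:ℝ) * ∑ a, ∑ b, ϖn a b := by
    apply mul_nonneg (Nat.cast_nonneg n)
    exact Finset.sum_nonneg fun a _ => Finset.sum_nonneg fun b _ => hϖ0 a b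
  have hR1 : (1:ℝ) ≤ R := by
    rw [hR, ← Real.exp_zero]
    apply Real.exp_le_exp.mpr
    have h1 : 0 ≤ Real.log n := Real.log_natCast_nonneg n
    have h2 : 0 ≤ ((n : ℝ) * ∑ a, ∑ b, ϖn a b) ^ α := Real.rpow_nonneg hbase α
    have h3 : (0:ℝ) ≤ ϑ := by rw [hϑ]; positivity
    positivity
  by_cases hfin : sν.Finite
  swap
  · rw [Set.Infinite.ncard (fun h => hfin h)]
    exact_mod_cast le_trans (by norm_num) hR1
  by_cases hne : sν.Nonempty
  swap
  · rw [Set.not_nonempty_iff_eq_empty.mp hne, Set.ncard_empty]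
    exact_mod_cast le_trans (by norm_num) hR1
  obtain ⟨ν₀, x₀, hx₀c, hx₀p, hx₀n⟩ := hne
  by_cases hn0 : n = 0
  · -- n = 0 : all measures in the set are the zero function
    have hsub : sν ⊆ {fun _ => (0:ℝ)} := by
      rintro ν ⟨x, -, -, rfl⟩
      have : empNbhd x = fun _ => (0:ℝ) := by
        funext y; simp [empNbhd, hn0]
      exact this
    calc (sν.ncard : ℝ) ≤ 1 := by
          exact_mod_cast (Set.ncard_le_ncard hsub (Set.finite_singleton _)).trans
            (le_of_eq (Set.ncard_singleton _))
      _ ≤ R := hR1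
  -- n ≥ 1
  have hkey : ∀ x : Config 𝒳 n, empPair x = ϖn →
      (n:ℝ) * ∑ a, ∑ b, ϖn a b = 2 * x.2.card := by
    intro x hx; rw [← hx]; exact pair_sum hn0 x
  have hcardeq : ∀ x : Config 𝒳 n, empPair x = ϖn → x.2.card = x₀.2.card := by
    intro x hx
    have h := (hkey x hx).symm.trans (hkey x₀ hx₀p)
    exact_mod_cast (by linarith : (x.2.card:ℝ) = (x₀.2.card:ℝ))
  by_cases hS0 : x₀.2.card = 0
  · -- no edges : unique neighbourhood measure
    have hsub : sν ⊆ {fun y : 𝒳 × (𝒳 → ℕ) =>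
        if y.2 = (fun _ : 𝒳 => (0:ℕ)) then ωn y.1 else 0} := by
      rintro ν ⟨x, hc, hp, rfl⟩
      have hx2 : x.2 = ∅ := Finset.card_eq_zero.mp ((hcardeq x hp).trans hS0)
      have hld : ∀ v : Fin n, (fun b => locDeg x v b) = (fun _ : 𝒳 => (0:ℕ)) := by
        intro v; funext b; simp [locDeg, hx2]
      have : empNbhd x = fun y : 𝒳 × (𝒳 → ℕ) =>
          if y.2 = (fun _ : 𝒳 => (0:ℕ)) then ωn y.1 else 0 := by
        funext y
        simp only [empNbhd]
        simp_rw [hld]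
        by_cases hy : y.2 = (fun _ : 𝒳 => (0:ℕ))
        · rw [if_pos hy]
          have hcc := congrFun hc y.1
          simp only [empColor] at hcc
          rw [← hcc]
          have hfe : (Finset.univ.filter
              (fun v : Fin n => x.1 v = y.1 ∧ (fun _ : 𝒳 => (0:ℕ)) = y.2))
              = Finset.univ.filter (fun v : Fin n => x.1 v = y.1) := by
            ext v; simp [hy]
          rw [hfe]
        · rw [if_neg hy]
          have : (Finset.univ.filter
              (fun v : Fin n => x.1 v = y.1 ∧ (fun _ : 𝒳 => (0:ℕ)) = y.2)) = ∅ := by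
            rw [Finset.filter_eq_empty_iff]
            rintro v - ⟨-, hvl⟩
            exact hy hvl.symm
          simp [this]
      exact this
    calc (sν.ncard : ℝ) ≤ 1 := by
          exact_mod_cast (Set.ncard_le_ncard hsub (Set.finite_singleton _)).trans
            (le_of_eq (Set.ncard_singleton _))
      _ ≤ R := hR1
  -- main case
  have hedge : x₀.2.Nonempty := Finset.card_pos.mp (Nat.pos_of_ne_zero hS0)
  obtain ⟨e₀, he₀⟩ := hedge
  have hn2 : 2 ≤ n := by
    have h1 : (e₀.1.2 : ℕ) < n := e₀.1.2.isLt
    have h2 : (e₀.1.1 : ℕ) < (e₀.1.2 : ℕ) := e₀.2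
    omega
  have hXne : Nonempty 𝒳 := ⟨x₀.1 ⟨0, by omega⟩⟩
  have hm1 : 1 ≤ m := by rw [hm]; exact Fintype.card_pos_iff.mpr hXne
  set S : ℕ := 2 * x₀.2.card with hSdef
  have hS2 : 2 ≤ S := by omega
  have hSn : (n:ℝ) * ∑ a, ∑ b, ϖn a b = (S:ℝ) := by
    rw [hkey x₀ hx₀p, hSdef]; push_cast; ring
  have hSR1 : (1:ℝ) ≤ (S:ℝ) := by
    have : (1:ℕ) ≤ S := by omega
    exact_mod_cast this
  set u : ℝ := (1:ℝ)/((m:ℝ)+1) with hudef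
  have hu0 : (0:ℝ) ≤ u := by rw [hudef]; positivity
  set t : ℕ := ⌈(S:ℝ) ^ u⌉₊ with htdef
  have htR1 : (1:ℝ) ≤ (S:ℝ) ^ u := Real.one_le_rpow hSR1 hu0
  have htpos : 0 < t := Nat.ceil_pos.mpr (lt_of_lt_of_le one_pos htR1)
  have ht1 : (S:ℝ) ^ u ≤ (t:ℝ) := Nat.le_ceil _
  have ht2 : (t:ℝ) ≤ 2 * (S:ℝ) ^ u := by
    have h := Nat.ceil_lt_add_one (le_trans zero_le_one htR1)
    rw [← htdef] at h
    linarith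
  set C : ℕ := m * (t^m + S/t) with hCdef
  have hdegsumAll : ∀ x : Config 𝒳 n, empPair x = ϖn →
      (∑ v : Fin n, ∑ b : 𝒳, locDeg x v b) = S := by
    intro x hp; rw [deg_sum, hcardeq x hp]
  have hvecleAll : ∀ x : Config 𝒳 n, empPair x = ϖn → ∀ (v : Fin n) (b : 𝒳),
      locDeg x v b ≤ S := by
    intro x hp v b
    calc locDeg x v b ≤ ∑ b' : 𝒳, locDeg x v b' :=
          Finset.single_le_sum (fun _ _ => Nat.zero_le _) (Finset.mem_univ b)
      _ ≤ ∑ v' : Fin n, ∑ b' : 𝒳, locDeg x v' b' :=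
          Finset.single_le_sum (f := fun v' => ∑ b' : 𝒳, locDeg x v' b')
            (fun _ _ => Nat.zero_le _) (Finset.mem_univ v)
      _ = S := hdegsumAll x hp
  have hKbound : ∀ x : Config 𝒳 n, empPair x = ϖn →
      (Finset.image (fun v : Fin n => fun b => locDeg x v b) Finset.univ).card
        ≤ t^m + S/t := by
    intro x hp
    set D := Finset.image (fun v : Fin n => fun b => locDeg x v b) Finset.univ with hD
    have hsplit := Finset.filter_union_filter_not_eq (fun ℓ : 𝒳 → ℕ => (∑ b, ℓ b) < t) D
    have hsmall : (D.filter (fun ℓ => (∑ b, ℓ b) < t)).card ≤ t^m := by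
      have hlt : ∀ ℓ' ∈ D.filter (fun ℓ => (∑ b, ℓ b) < t), ∀ b, ℓ' b < t := by
        intro ℓ' hℓ' b
        have h := (Finset.mem_filter.mp hℓ').2
        exact lt_of_le_of_lt
          (Finset.single_le_sum (f := fun b => ℓ' b) (fun _ _ => Nat.zero_le _)
            (Finset.mem_univ b)) h
      have hinj' : (D.filter (fun ℓ => (∑ b, ℓ b) < t)).card
          ≤ (Finset.univ : Finset (𝒳 → Fin t)).card := by
        apply Finset.card_le_card_of_injOn
          (fun ℓ b => (⟨ℓ b % t, Nat.mod_lt _ htpos⟩ : Fin t))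
        · intro ℓ hℓ; exact Finset.mem_univ _
        · intro ℓ1 h1 ℓ2 h2 hfe
          funext b
          have e2 : ℓ1 b % t = ℓ2 b % t := congrArg Fin.val (congrFun hfe b)
          rwa [Nat.mod_eq_of_lt (hlt _ (Finset.mem_coe.mp h1) b),
            Nat.mod_eq_of_lt (hlt _ (Finset.mem_coe.mp h2) b)] at e2
      calc (D.filter (fun ℓ => (∑ b, ℓ b) < t)).card
          ≤ (Finset.univ : Finset (𝒳 → Fin t)).card := hinj'
        _ = t^m := by rw [Finset.card_univ, Fintype.card_fun, Fintype.card_fin, hm]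
    have hbig : (D.filter (fun ℓ => ¬ ((∑ b, ℓ b) < t))).card ≤ S / t := by
      rw [Nat.le_div_iff_mul_le htpos]
      have hsub2 : D.filter (fun ℓ => ¬ ((∑ b, ℓ b) < t)) ⊆
          Finset.image (fun v : Fin n => fun b => locDeg x v b)
            (Finset.univ.filter (fun v => t ≤ ∑ b, locDeg x v b)) := by
        intro ℓ hℓ
        obtain ⟨hmem, hge⟩ := Finset.mem_filter.mp hℓ
        obtain ⟨v, -, rfl⟩ := Finset.mem_image.mp hmem
        exact Finset.mem_image.mpr ⟨v,
          Finset.mem_filter.mpr ⟨Finset.mem_univ _, not_lt.mp hge⟩, rfl⟩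
      calc (D.filter (fun ℓ => ¬ ((∑ b, ℓ b) < t))).card * t
          ≤ (Finset.univ.filter (fun v : Fin n => t ≤ ∑ b, locDeg x v b)).card * t :=
            Nat.mul_le_mul_right t ((Finset.card_le_card hsub2).trans Finset.card_image_le)
        _ ≤ ∑ v ∈ Finset.univ.filter (fun v : Fin n => t ≤ ∑ b, locDeg x v b),
              ∑ b, locDeg x v b := by
            rw [← smul_eq_mul]
            exact Finset.card_nsmul_le_sum _ _ _ (fun v hv => (Finset.mem_filter.mp hv).2)
        _ ≤ ∑ v : Fin n, ∑ b, locDeg x v b :=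
            Finset.sum_le_sum_of_subset (Finset.filter_subset _ _)
        _ = S := hdegsumAll x hp
    calc D.card
        ≤ (D.filter (fun ℓ => (∑ b, ℓ b) < t)).card
          + (D.filter (fun ℓ => ¬ ((∑ b, ℓ b) < t))).card := by
          conv_lhs => rw [← hsplit]
          exact Finset.card_union_le _ _
      _ ≤ t^m + S/t := Nat.add_le_add hsmall hbig
  set β := (𝒳 × (𝒳 → Fin (S+1))) × Fin (n+1) with hβ
  set enc : ((𝒳 × (𝒳 → ℕ)) → ℝ) → Finset β := fun ν =>
    Finset.univ.filter (fun qk : β =>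
      ν (qk.1.1, fun b => (qk.1.2 b : ℕ)) = ((qk.2 : ℕ) : ℝ)/(n:ℝ) ∧ (qk.2 : ℕ) ≠ 0)
    with hencdef
  have hCcard : ∀ ν ∈ sν, (enc ν).card ≤ C := by
    rintro ν ⟨x, hc, hp, rfl⟩
    set truncF : (𝒳 → ℕ) → (𝒳 → Fin (S+1)) :=
      fun ℓ b => (⟨min (ℓ b) S, Nat.lt_succ_of_le (min_le_right _ _)⟩ : Fin (S+1)) with htrunc
    set D' := Finset.image (fun v : Fin n => truncF (fun b => locDeg x v b)) Finset.univ
      with hD'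
    have hstep : (enc (empNbhd x)).card ≤ ((Finset.univ : Finset 𝒳) ×ˢ D').card := by
      apply Finset.card_le_card_of_injOn Prod.fst
      · rintro ⟨⟨a, g⟩, k⟩ hmem
        rw [hencdef] at hmem
        obtain ⟨-, hval, hk0⟩ := Finset.mem_filter.mp hmem
        have hne0 : empNbhd x (a, fun b => (g b : ℕ)) ≠ 0 := by
          rw [hval]
          apply div_ne_zero
          · exact_mod_cast hk0
          · exact_mod_cast hn0
        have hcard0 : (Finset.univ.filter (fun v : Fin n =>
            x.1 v = a ∧ (fun b => locDeg x v b) = fun b => (g b : ℕ))).card ≠ 0 := by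
          intro h
          apply hne0
          simp [empNbhd, h]
        obtain ⟨v, hv⟩ := Finset.card_pos.mp (Nat.pos_of_ne_zero hcard0)
        obtain ⟨-, hvc, hvl⟩ := Finset.mem_filter.mp hv
        refine Finset.mem_product.mpr ⟨Finset.mem_univ _, ?_⟩
        rw [hD']
        refine Finset.mem_image.mpr ⟨v, Finset.mem_univ _, ?_⟩
        funext b
        apply Fin.ext
        have hb := congrFun hvl b
        simp only [htrunc]
        rw [hb, min_eq_left (Nat.lt_succ_iff.mp (g b).isLt)]
      · rintro ⟨⟨a, g⟩, k⟩ h1 ⟨⟨a', g'⟩, k'⟩ h2 hfst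
        have h1' := Finset.mem_coe.mp h1
        have h2' := Finset.mem_coe.mp h2
        rw [hencdef] at h1' h2'
        obtain ⟨-, hval1, -⟩ := Finset.mem_filter.mp h1'
        obtain ⟨-, hval2, -⟩ := Finset.mem_filter.mp h2'
        obtain ⟨ha, hg⟩ := Prod.mk.inj hfst
        subst ha; subst hg
        have hnne : (n:ℝ) ≠ 0 := by exact_mod_cast hn0
        have heq : ((k:ℕ):ℝ)/(n:ℝ) = ((k':ℕ):ℝ)/(n:ℝ) := hval1.symm.trans hval2
        have hkk : (k:ℕ) = (k':ℕ) := by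
          have h2 : ((k:ℕ):ℝ) = ((k':ℕ):ℝ) := by
            field_simp [hnne] at heq
            exact_mod_cast heq
          exact_mod_cast h2
        have : k = k' := Fin.ext hkk
        rw [this]
    have hD'le : D'.card ≤ t^m + S/t := by
      rw [hD']
      have himg2 : Finset.image (fun v : Fin n => truncF (fun b => locDeg x v b)) Finset.univ
          = Finset.image truncF
            (Finset.image (fun v : Fin n => fun b => locDeg x v b) Finset.univ) := by
        rw [Finset.image_image]
        rfl
      rw [himg2]
      exact le_trans Finset.card_image_le (hKbound x hp)
    calc (enc (empNbhd x)).card ≤ ((Finset.univ : Finset 𝒳) ×ˢ D').card := hstep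
      _ = m * D'.card := by rw [Finset.card_product, Finset.card_univ, hm]
      _ ≤ m * (t^m + S/t) := Nat.mul_le_mul_left m hD'le
  have hinj : Set.InjOn enc sν := by
    have hzero : ∀ x : Config 𝒳 n, empPair x = ϖn → ∀ (a : 𝒳) (ℓ : 𝒳 → ℕ) (b : 𝒳),
        S < ℓ b → empNbhd x (a, ℓ) = 0 := by
      intro x hp a ℓ b hb
      have hempty : (Finset.univ.filter (fun v : Fin n =>
          x.1 v = a ∧ (fun b => locDeg x v b) = ℓ)) = ∅ := by
        rw [Finset.filter_eq_empty_iff]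
        rintro v -
        rintro ⟨-, hvl⟩
        have h1 := congrFun hvl b
        have h2 := hvecleAll x hp v b
        omega
      simp [empNbhd, hempty]
    rintro ν₁ hν₁ ν₂ hν₂ hencEq
    obtain ⟨x1, -, hp1, rfl⟩ := hν₁
    obtain ⟨x2, -, hp2, rfl⟩ := hν₂
    funext y
    obtain ⟨a, ℓ⟩ := y
    by_cases hbig : ∃ b, S < ℓ b
    · obtain ⟨b, hb⟩ := hbig
      rw [hzero x1 hp1 a ℓ b hb, hzero x2 hp2 a ℓ b hb]
    push_neg at hbig
    set g : 𝒳 → Fin (S+1) := fun b => ⟨ℓ b, Nat.lt_succ_of_le (hbig b)⟩ with hgdef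
    have hpt : ((a, fun b => ((g b : ℕ))) : 𝒳 × (𝒳 → ℕ)) = (a, ℓ) := by
      have hgl : (fun b => ((g b : ℕ))) = ℓ := by funext b; rfl
      rw [hgl]
    have hswap : ∀ (w1 w2 : Config 𝒳 n),
        enc (empNbhd w1) = enc (empNbhd w2) →
        empNbhd w1 (a, ℓ) ≠ 0 → empNbhd w2 (a, ℓ) = empNbhd w1 (a, ℓ) := by
      intro w1 w2 hEq hne0
      set c : ℕ := (Finset.univ.filter (fun v : Fin n =>
          w1.1 v = a ∧ (fun b => locDeg w1 v b) = ℓ)).card with hcdef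
      have hval : empNbhd w1 (a, ℓ) = (c:ℝ)/(n:ℝ) := rfl
      have hcn : c ≤ n := by
        rw [hcdef]
        calc (Finset.univ.filter (fun v : Fin n =>
            w1.1 v = a ∧ (fun b => locDeg w1 v b) = ℓ)).card
            ≤ (Finset.univ : Finset (Fin n)).card := Finset.card_filter_le _ _
          _ = n := by simp
      have hc0 : c ≠ 0 := by
        intro h; apply hne0; rw [hval, h]; simp
      have hmem : (⟨⟨a, g⟩, ⟨c, Nat.lt_succ_of_le hcn⟩⟩ : β) ∈ enc (empNbhd w1) := by
        rw [hencdef]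
        refine Finset.mem_filter.mpr ⟨Finset.mem_univ _, ?_, hc0⟩
        show empNbhd w1 (a, fun b => ((g b : ℕ))) = (c:ℝ)/(n:ℝ)
        rw [hpt]
        exact hval
      rw [hEq, hencdef] at hmem
      obtain ⟨-, hval2, -⟩ := Finset.mem_filter.mp hmem
      rw [hpt] at hval2
      rw [hval]
      exact hval2
    rcases eq_or_ne (empNbhd x1 (a,ℓ)) 0 with h1 | h1
    · rcases eq_or_ne (empNbhd x2 (a,ℓ)) 0 with h2 | h2
      · rw [h1, h2]
      · exact hswap x2 x1 hencEq.symm h2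
    · exact (hswap x1 x2 hencEq h1).symm
  set N : ℕ := Fintype.card β with hNdef
  have hN1 : 1 ≤ N := by
    rw [hNdef]
    haveI := hXne
    exact Fintype.card_pos
  have hcount : sν.ncard ≤ (C+1) * N^C := by
    have h1 : sν.ncard = (enc '' sν).ncard := (Set.ncard_image_of_injOn hinj).symm
    have h2 : (enc '' sν).ncard
        ≤ (Finset.univ.filter (fun q : Finset β => q.card ≤ C)).card := by
      rw [← Set.ncard_coe_finset]
      apply Set.ncard_le_ncard ?_ (Finset.finite_toSet _)
      rintro q ⟨ν, hν, rfl⟩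
      simp only [Finset.coe_filter, Set.mem_setOf_eq]
      exact ⟨Finset.mem_univ _, hCcard ν hν⟩
    have h3 : (Finset.univ.filter (fun q : Finset β => q.card ≤ C)).card ≤ (C+1) * N^C := by
      have hsub : Finset.univ.filter (fun q : Finset β => q.card ≤ C) ⊆
          (Finset.range (C+1)).biUnion
            (fun i => Finset.powersetCard i (Finset.univ : Finset β)) := by
        intro q hq
        obtain ⟨-, hqc⟩ := Finset.mem_filter.mp hq
        exact Finset.mem_biUnion.mpr ⟨q.card, Finset.mem_range.mpr (Nat.lt_succ_of_le hqc),
          Finset.mem_powersetCard.mpr ⟨Finset.subset_univ q, rfl⟩⟩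
      calc (Finset.univ.filter (fun q : Finset β => q.card ≤ C)).card
          ≤ ((Finset.range (C+1)).biUnion
              (fun i => Finset.powersetCard i (Finset.univ : Finset β))).card :=
            Finset.card_le_card hsub
        _ ≤ ∑ i ∈ Finset.range (C+1),
              (Finset.powersetCard i (Finset.univ : Finset β)).card :=
            Finset.card_biUnion_le
        _ = ∑ i ∈ Finset.range (C+1), Nat.choose N i := by
            refine Finset.sum_congr rfl fun i _ => ?_
            rw [Finset.card_powersetCard, Finset.card_univ]
        _ ≤ ∑ i ∈ Finset.range (C+1), N ^ C := by
            refine Finset.sum_le_sum fun i hi => ?_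
            calc Nat.choose N i ≤ N ^ i :=
                  (Nat.choose_le_descFactorial N i).trans (Nat.descFactorial_le_pow N i)
              _ ≤ N ^ C := Nat.pow_le_pow_right hN1
                  (Nat.lt_succ_iff.mp (Finset.mem_range.mp hi))
        _ = (C+1) * N^C := by rw [Finset.sum_const, Finset.card_range, smul_eq_mul]
    exact h1 ▸ (h2.trans h3)
  -- numeric conclusion
  have hNval : N = (m * (S+1)^m) * (n+1) := by
    show Fintype.card ((𝒳 × (𝒳 → Fin (S+1))) × Fin (n+1)) = (m * (S+1)^m) * (n+1)
    rw [Fintype.card_prod, Fintype.card_prod, Fintype.card_fun, Fintype.card_fin,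
      Fintype.card_fin, ← hm]
  have hcard2 : x₀.2.card ≤ n^2 := by
    calc x₀.2.card ≤ Fintype.card (Edge n) := Finset.card_le_univ x₀.2
      _ ≤ Fintype.card (Fin n × Fin n) := Fintype.card_subtype_le _
      _ = n^2 := by rw [Fintype.card_prod, Fintype.card_fin]; ring
  have hNn : N ≤ n^(7*m) :=
    N_le_pow m n S N hm1 hn2 (S_succ_le n S x₀.2.card hn2 hSdef hcard2) hNval
  rw [hudef] at ht1 ht2
  have hnum := numeric_bound m n S t C N hm1 hn2 hS2 htpos ht1 ht2 hCdef hN1 hNn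
  calc (sν.ncard : ℝ) ≤ (((C+1) * N^C : ℕ):ℝ) := by exact_mod_cast hcount
    _ ≤ Real.exp ((((m:ℝ)+1)^2 * 2^(m+5)) * Real.log n *
        (S:ℝ) ^ ((2*(m:ℝ)-1)/(2*(m:ℝ)))) := hnum
    _ = R := by rw [hR, hϑ, hα, hSn]

end ColoredLDP
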